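/- Suppose the penalized problem min_{X∈Ω} f(X) + ρ·(‖X‖_* − ‖X‖_{(r)}) is a global exact penalty for min_{X∈Ω, rank(X)≤r} f(X): there is ρ̄ > 0 such that for every ρ > ρ̄ the two problems have the same global minimizers. Then for any p ∈ (0,1), there is ρ' > 0 such that for every ρ > ρ', every global minimizer of min_{X∈Ω} f(X) + ρ·∑_{i=r+1}^n σ_i(X)^p is a global minimizer of min_{X∈Ω, rank(X)≤r} f(X), and conversely; i.e., the Schatten-p truncated penalty is also a global exact penalty. -/

import Mathlib

/-- Singular values of a real `n × m` matrix (in some order). -/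
noncomputable def singVals {n m : ℕ} (X : Matrix (Fin n) (Fin m) ℝ) (i : Fin n) : ℝ :=
  Real.sqrt ((Matrix.isHermitian_mul_conjTranspose_self X).eigenvalues i)

/-- suppose the penalty `f + ρ·∑_{i>r} σ_i` is a global exact penalty
for `min {f(X) : X ∈ Ω, rank X ≤ r}` (for all `ρ` beyond a threshold the argmin sets
coincide). Then for any `p ∈ (0,1)` the Schatten-`p` truncated penalty
`f + ρ·∑_{i>r} σ_i^p` is also a global exact penalty: beyond some threshold `ρ'`, the
global minimizers of the penalized problem are exactly the global minimizers of the
rank-constrained problem. Here `σ : 𝕏 → Fin n → ℝ` gives the singular values in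
nonincreasing order. -/
theorem stmt15 (n m r : ℕ) (hr1 : 1 ≤ r) (hrn : r ≤ n)
    (Ω : Set (Matrix (Fin n) (Fin m) ℝ)) (hΩ : IsClosed Ω)
    (f : Matrix (Fin n) (Fin m) ℝ → ℝ)
    (σ : Matrix (Fin n) (Fin m) ℝ → Fin n → ℝ)
    (hperm : ∀ X, ∃ e : Equiv.Perm (Fin n), ∀ i, σ X i = singVals X (e i))
    (hmono : ∀ X, Antitone (σ X)) (hnonneg : ∀ X i, 0 ≤ σ X i)
    (hrankσ : ∀ X : Matrix (Fin n) (Fin m) ℝ,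
      X.rank ≤ r ↔ ∀ i : Fin n, r ≤ i.1 → σ X i = 0)
    (hlb : ∃ c : ℝ, ∀ X ∈ Ω, c ≤ f X)
    (hexact : ∃ ρbar > (0:ℝ), ∀ ρ > ρbar,
      {X | X ∈ Ω ∧ IsMinOn
          (fun Z => f Z + ρ * ∑ i ∈ Finset.univ.filter (fun i : Fin n => r ≤ i.1), σ Z i)
          Ω X} =
      {X | X ∈ {Z ∈ Ω | Z.rank ≤ r} ∧ IsMinOn f {Z ∈ Ω | Z.rank ≤ r} X})
    (p : ℝ) (hp0 : 0 < p) (hp1 : p < 1)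
    (hattain : ∀ ρ > (0:ℝ), ∃ X ∈ Ω, IsMinOn
      (fun Z => f Z + ρ * ∑ i ∈ Finset.univ.filter (fun i : Fin n => r ≤ i.1), (σ Z i) ^ p)
      Ω X)
    (hattainΓ : ∃ X ∈ {Z ∈ Ω | Z.rank ≤ r}, IsMinOn f {Z ∈ Ω | Z.rank ≤ r} X) :
    ∃ ρ' > (0:ℝ), ∀ ρ > ρ',
      {X | X ∈ Ω ∧ IsMinOn
          (fun Z => f Z + ρ * ∑ i ∈ Finset.univ.filter (fun i : Fin n => r ≤ i.1), (σ Z i) ^ p)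
          Ω X} =
      {X | X ∈ {Z ∈ Ω | Z.rank ≤ r} ∧ IsMinOn f {Z ∈ Ω | Z.rank ≤ r} X} := by
  classical
  obtain ⟨c, hc⟩ := hlb
  obtain ⟨ρbar, hρbar0, hex⟩ := hexact
  obtain ⟨Xs, hXsΓ, hXsmin⟩ := hattainΓ
  obtain ⟨hXsΩ, hXsr⟩ := hXsΓ
  set v : ℝ := f Xs with hv
  set I := Finset.univ.filter (fun i : Fin n => r ≤ i.1) with hI
  have hσXs : ∀ i ∈ I, σ Xs i = 0 := by
    intro i hi
    exact (hrankσ Xs).mp hXsr i (Finset.mem_filter.mp hi).2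
  have hsum0 : ∑ i ∈ I, (σ Xs i) ^ p = 0 := by
    apply Finset.sum_eq_zero
    intro i hi
    rw [hσXs i hi, Real.zero_rpow hp0.ne']
  have hsum0' : ∑ i ∈ I, σ Xs i = 0 := Finset.sum_eq_zero hσXs
  refine ⟨max ρbar (v - c), lt_max_of_lt_left hρbar0, ?_⟩
  intro ρ hρ
  have hρbar' : ρbar < ρ := lt_of_le_of_lt (le_max_left _ _) hρ
  have hρvc : v - c < ρ := lt_of_le_of_lt (le_max_right _ _) hρ
  have hρ0 : 0 < ρ := lt_trans hρbar0 hρbar'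
  have h1set := hex ρ hρbar'
  have hXs1 : IsMinOn (fun Z => f Z + ρ * ∑ i ∈ I, σ Z i) Ω Xs := by
    have hmem : Xs ∈ {X | X ∈ {Z ∈ Ω | Z.rank ≤ r} ∧ IsMinOn f {Z ∈ Ω | Z.rank ≤ r} X} :=
      ⟨⟨hXsΩ, hXsr⟩, hXsmin⟩
    rw [← h1set] at hmem
    exact hmem.2
  have hvle1 : ∀ Z ∈ Ω, v ≤ f Z + ρ * ∑ i ∈ I, σ Z i := by
    intro Z hZ
    have h := isMinOn_iff.mp hXs1 Z hZ
    simpa [hsum0'] using h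
  have key : ∀ X, X ∈ Ω → IsMinOn (fun Z => f Z + ρ * ∑ i ∈ I, (σ Z i) ^ p) Ω X →
      (f X + ρ * ∑ i ∈ I, (σ X i) ^ p = v ∧
       X ∈ {Z ∈ Ω | Z.rank ≤ r} ∧ IsMinOn f {Z ∈ Ω | Z.rank ≤ r} X) := by
    intro X hX hmin
    have hle : f X + ρ * ∑ i ∈ I, (σ X i) ^ p ≤ v := by
      have h := isMinOn_iff.mp hmin Xs hXsΩ
      simpa [hsum0] using h
    have hSnn : ∀ i ∈ I, 0 ≤ (σ X i) ^ p := fun i _ => Real.rpow_nonneg (hnonneg X i) p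
    have hterm : ∀ i ∈ I, σ X i ≤ (σ X i) ^ p := by
      intro i hi
      have hsum_le : (σ X i) ^ p ≤ ∑ j ∈ I, (σ X j) ^ p :=
        Finset.single_le_sum hSnn hi
      have hcf : c ≤ f X := hc X hX
      have h1 : ρ * (σ X i) ^ p ≤ v - c := by
        nlinarith [mul_le_mul_of_nonneg_left hsum_le hρ0.le]
      have hlt1 : (σ X i) ^ p < 1 := by nlinarith
      have hσlt1 : σ X i < 1 := by
        by_contra h
        push_neg at h
        have := Real.one_le_rpow h hp0.le
        linarith
      rcases eq_or_lt_of_le (hnonneg X i) with h0 | h0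
      · rw [← h0]; rw [Real.zero_rpow hp0.ne']
      · calc σ X i = (σ X i) ^ (1:ℝ) := (Real.rpow_one _).symm
          _ ≤ (σ X i) ^ p := Real.rpow_le_rpow_of_exponent_ge h0 hσlt1.le hp1.le
    have hsumle : ∑ i ∈ I, σ X i ≤ ∑ i ∈ I, (σ X i) ^ p :=
      Finset.sum_le_sum hterm
    have h1X : f X + ρ * ∑ i ∈ I, σ X i ≤ v := by
      nlinarith [mul_le_mul_of_nonneg_left hsumle hρ0.le]
    have hv1 : v ≤ f X + ρ * ∑ i ∈ I, σ X i := hvle1 X hX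
    have heq1 : f X + ρ * ∑ i ∈ I, σ X i = v := le_antisymm h1X hv1
    have heqp : f X + ρ * ∑ i ∈ I, (σ X i) ^ p = v := by
      refine le_antisymm hle ?_
      nlinarith [mul_le_mul_of_nonneg_left hsumle hρ0.le]
    have hX1min : IsMinOn (fun Z => f Z + ρ * ∑ i ∈ I, σ Z i) Ω X := by
      rw [isMinOn_iff]
      intro Z hZ
      show f X + ρ * ∑ i ∈ I, σ X i ≤ _
      rw [heq1]
      exact hvle1 Z hZ
    have hmem : X ∈ {X | X ∈ Ω ∧ IsMinOn (fun Z => f Z + ρ * ∑ i ∈ I, σ Z i) Ω X} :=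
      ⟨hX, hX1min⟩
    rw [h1set] at hmem
    exact ⟨heqp, hmem.1, hmem.2⟩
  obtain ⟨X0, hX0Ω, hX0min⟩ := hattain ρ hρ0
  obtain ⟨hX0val, -, -⟩ := key X0 hX0Ω hX0min
  have hvlep : ∀ Z ∈ Ω, v ≤ f Z + ρ * ∑ i ∈ I, (σ Z i) ^ p := by
    intro Z hZ
    have h := isMinOn_iff.mp hX0min Z hZ
    rw [hX0val] at h
    exact h
  ext X
  simp only [Set.mem_setOf_eq]
  constructor
  · rintro ⟨hXΩ, hXmin⟩
    exact (key X hXΩ hXmin).2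
  · rintro ⟨⟨hXΩ, hXr⟩, hXmin⟩
    refine ⟨hXΩ, ?_⟩
    have hfX : f X = v := le_antisymm (isMinOn_iff.mp hXmin Xs ⟨hXsΩ, hXsr⟩)
      (isMinOn_iff.mp hXsmin X ⟨hXΩ, hXr⟩)
    have hσX0 : ∑ i ∈ I, (σ X i) ^ p = 0 := by
      apply Finset.sum_eq_zero
      intro i hi
      rw [(hrankσ X).mp hXr i (Finset.mem_filter.mp hi).2, Real.zero_rpow hp0.ne']
    rw [isMinOn_iff]
    intro Z hZ
    simp only [hσX0, hfX, mul_zero, add_zero]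
    exact hvlep Z hZ
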